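/- Let c : ℝ^{2n} × ℝ → ℝ^{2n} be C¹, and let p(t) solve the feedback law ṗ = (I − ∂c/∂p)^{-1}(−k(p − c) + ∂c/∂t) with k > 0, assuming the inverse exists along the trajectory. Then the error e(t) = p(t) − c(p(t),t) satisfies ė = −k e, hence ‖e(t)‖ = e^{−k(t−t_0)}‖e(t_0)‖, so the configuration converges exponentially to a centroidal configuration. -/

import Mathlib

open ContinuousLinearMap

/-- TVD-C: under `ṗ = (I − ∂c/∂p)⁻¹(−k(p−c) + ∂c/∂t)`, the error
`e(t) = p(t) − c(p(t),t)` decays exponentially: `‖e(t)‖ = e^{−k(t−t₀)}‖e(t₀)‖`. -/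
theorem tvdc_exponential_convergence
    (n : ℕ) (k : ℝ) (hk : 0 < k)
    (c : EuclideanSpace ℝ (Fin (2 * n)) → ℝ → EuclideanSpace ℝ (Fin (2 * n)))
    (hc : ContDiff ℝ 1 (fun x : EuclideanSpace ℝ (Fin (2 * n)) × ℝ => c x.1 x.2))
    (p : ℝ → EuclideanSpace ℝ (Fin (2 * n))) (t₀ : ℝ)
    (Dc : ℝ → (EuclideanSpace ℝ (Fin (2 * n)) × ℝ →L[ℝ]
      EuclideanSpace ℝ (Fin (2 * n))))
    (hDc : ∀ t, HasFDerivAt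
      (fun x : EuclideanSpace ℝ (Fin (2 * n)) × ℝ => c x.1 x.2) (Dc t) (p t, t))
    -- `B t` is the inverse of `I − ∂c/∂p` along the trajectory, assumed to exist
    (B : ℝ → (EuclideanSpace ℝ (Fin (2 * n)) →L[ℝ] EuclideanSpace ℝ (Fin (2 * n))))
    (hB₁ : ∀ t ≥ t₀,
      (ContinuousLinearMap.id ℝ _ -
        (Dc t).comp (ContinuousLinearMap.inl ℝ _ ℝ)).comp (B t) =
        ContinuousLinearMap.id ℝ _)
    (hB₂ : ∀ t ≥ t₀,
      (B t).comp (ContinuousLinearMap.id ℝ _ -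
        (Dc t).comp (ContinuousLinearMap.inl ℝ _ ℝ)) =
        ContinuousLinearMap.id ℝ _)
    (hp : ∀ t ≥ t₀, HasDerivAt p
      (B t (-(k • (p t - c (p t) t)) + Dc t (0, 1))) t) :
    (∀ t ≥ t₀, HasDerivAt (fun s => p s - c (p s) s)
        (-(k • (p t - c (p t) t))) t) ∧
    ∀ t ≥ t₀, ‖p t - c (p t) t‖ =
      Real.exp (-k * (t - t₀)) * ‖p t₀ - c (p t₀) t₀‖ := by
  set e : ℝ → EuclideanSpace ℝ (Fin (2 * n)) := fun s => p s - c (p s) s with he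
  have key : ∀ t ≥ t₀, HasDerivAt e (-(k • e t)) t := by
    intro t ht
    set u : EuclideanSpace ℝ (Fin (2 * n)) := -(k • e t) + Dc t (0, 1) with hu
    have hp' := hp t ht
    have hpair : HasDerivAt (fun s => (p s, s)) (B t u, 1) t :=
      HasDerivAt.prodMk hp' (hasDerivAt_id t)
    have hcomp0 := HasFDerivAt.comp_hasDerivAt (f := fun s => (p s, s)) t (hDc t) hpair
    have hcomp : HasDerivAt (fun s => c (p s) s) (Dc t (B t u, 1)) t := hcomp0
    have hde : HasDerivAt e (B t u - Dc t (B t u, 1)) t := hp'.sub hcomp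
    have hsplit : (Dc t) (B t u, 1) = (Dc t) (B t u, 0) + (Dc t) (0, 1) := by
      rw [← map_add]; norm_num
    have hinv : B t u - (Dc t) (B t u, 0) = u := by
      have := congrArg (fun f => f u) (hB₁ t ht)
      simpa using this
    have heq : B t u - Dc t (B t u, 1) = -(k • e t) := by
      rw [hsplit, show B t u - ((Dc t) (B t u, 0) + (Dc t) (0, 1)) =
        (B t u - (Dc t) (B t u, 0)) - (Dc t) (0, 1) from by abel, hinv, hu]
      abel
    rwa [heq] at hde
  refine ⟨key, fun t ht => ?_⟩
  set g : ℝ → EuclideanSpace ℝ (Fin (2 * n)) := fun s => Real.exp (k * s) • e s with hg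
  have hg' : ∀ s ≥ t₀, HasDerivAt g 0 s := by
    intro s hs
    have h1 : HasDerivAt (fun x => Real.exp (k * x)) (k * Real.exp (k * s)) s := by
      have h := (Real.hasDerivAt_exp (k * s)).comp s
        ((hasDerivAt_id s).const_mul k)
      rw [show k * Real.exp (k * s) = Real.exp (k * s) * (k * 1) by ring]
      exact h
    have := h1.smul (key s hs)
    simp [smul_smul, mul_comm, smul_add, add_neg_cancel] at this
    exact this
  have hconst : g t = g t₀ := by
    have hcont : ContinuousOn g (Set.Icc t₀ t) := fun s hs =>
      ((hg' s hs.1).continuousAt).continuousWithinAt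
    exact constant_of_has_deriv_right_zero hcont
      (fun s hs => (hg' s hs.1).hasDerivWithinAt) t (Set.right_mem_Icc.2 ht)
  have hconst' : Real.exp (k * t) • e t = Real.exp (k * t₀) • e t₀ := hconst
  have hne : Real.exp (k * t) ≠ 0 := Real.exp_ne_zero _
  have hfinal : e t = Real.exp (-k * (t - t₀)) • e t₀ := by
    rw [show Real.exp (-k * (t - t₀)) = (Real.exp (k * t))⁻¹ * Real.exp (k * t₀) from by
      rw [← Real.exp_neg, ← Real.exp_add]; ring_nf]
    rw [mul_smul, ← hconst', smul_smul, inv_mul_cancel₀ hne, one_smul]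
  rw [show p t - c (p t) t = e t from rfl, show p t₀ - c (p t₀) t₀ = e t₀ from rfl,
    hfinal, norm_smul]
  simp [Real.abs_exp]
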